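/- Fix $m \in \mathbb{N}$ and let $W = (W_1,\ldots,W_d)$ be a standard $d$-dimensional Brownian motion on $[0,1]$. Then, almost surely, the Wiener monomials $\{W_\alpha\}_{|\alpha| \le m}$, viewed as real-valued functions on $[0,1]$, are linearly independent over $\mathbb{R}$: almost surely, for every family of real coefficients $(c_\alpha)_{|\alpha| \le m}$, if $\sum_{|\alpha| \le m} c_\alpha W_\alpha(t) = 0$ for all $t \in [0,1]$, then $c_\alpha = 0$ for every $\alpha$. -/

import Mathlib

open MeasureTheory ProbabilityTheory

/-- A standard `d`-dimensional Brownian motion on the probability space `(Ω, P)`: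
each coordinate starts at `0`, has almost surely continuous paths, Gaussian increments
`W i t - W i s ∼ N(0, t - s)`, and all increments over disjoint time intervals
(across all coordinates) are independent. -/
structure IsStdBrownianMotion {Ω : Type*} [MeasurableSpace Ω] (P : Measure Ω)
    {d : ℕ} (W : Fin d → ℝ → Ω → ℝ) : Prop where
  measurable : ∀ i t, Measurable (W i t)
  init : ∀ i, ∀ᵐ ω ∂P, W i 0 ω = 0
  cont : ∀ᵐ ω ∂P, ∀ i, Continuous fun t => W i t ω
  gaussian_incr : ∀ i, ∀ s t : ℝ, 0 ≤ s → s ≤ t →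
    P.map (fun ω => W i t ω - W i s ω) = gaussianReal 0 (Real.toNNReal (t - s))
  indep_incr : ∀ (n : ℕ) (t : ℕ → ℝ), Monotone t → (∀ j, 0 ≤ t j) →
    iIndepFun
      (fun p : Fin d × Fin n => fun ω =>
        W p.1 (t ((p.2 : ℕ) + 1)) ω - W p.1 (t (p.2 : ℕ)) ω) P

lemma measurable_mv_eval {ι : Type*} [Fintype ι] (p : MvPolynomial ι ℝ) :
    Measurable fun x : ι → ℝ => MvPolynomial.eval x p := by
  induction p using MvPolynomial.induction_on with
  | C a => simpa using measurable_const
  | add p q hp hq => simp only [map_add]; exact hp.add hq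
  | mul_X p i hp => simp only [map_mul, MvPolynomial.eval_X]; exact hp.mul (measurable_pi_apply i)

lemma mv_null : ∀ (n : ℕ) (p : MvPolynomial (Fin n) ℝ), p ≠ 0 →
    (Measure.pi fun _ : Fin n => (volume : Measure ℝ)) {x | MvPolynomial.eval x p = 0} = 0 := by
  intro n
  induction n with
  | zero =>
    intro p hp
    obtain ⟨a, rfl⟩ := MvPolynomial.C_surjective (Fin 0) p
    have ha : a ≠ 0 := fun h => hp (by simp [h])
    have : {x : Fin 0 → ℝ | MvPolynomial.eval x (MvPolynomial.C a) = 0} = ∅ := by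
      ext x; simp [ha]
    rw [this]
    simp
  | succ n ih =>
    intro p hp
    set q := MvPolynomial.finSuccEquiv ℝ n p with hq
    have hq0 : q ≠ 0 := by
      simp only [hq, ne_eq, EmbeddingLike.map_eq_zero_iff]
      exact hp
    obtain ⟨j, hj⟩ : ∃ j, q.coeff j ≠ 0 := by
      by_contra h
      push_neg at h
      exact hq0 (Polynomial.ext fun j => by simp [h j])
    have hS : MeasurableSet {x : Fin (n+1) → ℝ | MvPolynomial.eval x p = 0} :=
      (measurable_mv_eval p) (measurableSet_singleton 0)
    set e := MeasurableEquiv.piFinSuccAbove (fun _ : Fin (n+1) => ℝ) 0 with he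
    have mp : MeasurePreserving e (Measure.pi fun _ : Fin (n+1) => (volume : Measure ℝ))
        ((volume : Measure ℝ).prod (Measure.pi fun _ : Fin n => (volume : Measure ℝ))) :=
      measurePreserving_piFinSuccAbove (fun _ : Fin (n+1) => (volume : Measure ℝ)) 0
    have key : (Measure.pi fun _ : Fin (n+1) => (volume : Measure ℝ))
          {x | MvPolynomial.eval x p = 0}
        = ((volume : Measure ℝ).prod (Measure.pi fun _ : Fin n => (volume : Measure ℝ)))
          (e.symm ⁻¹' {x | MvPolynomial.eval x p = 0}) :=
      ((mp.symm e).measure_preimage hS.nullMeasurableSet).symm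
    rw [key]
    have hA : MeasurableSet (e.symm ⁻¹' {x | MvPolynomial.eval x p = 0}) :=
      e.symm.measurable hS
    rw [Measure.prod_apply_symm hA]
    have hsec : ∀ z : Fin n → ℝ,
        (fun y : ℝ => (y, z)) ⁻¹' (e.symm ⁻¹' {x | MvPolynomial.eval x p = 0})
        = {y : ℝ | Polynomial.eval y (Polynomial.map (MvPolynomial.eval z) q) = 0} := by
      intro z
      ext y
      simp only [Set.mem_preimage, Set.mem_setOf_eq]
      have : e.symm (y, z) = Fin.cons y z := by
        simp [he, MeasurableEquiv.piFinSuccAbove_symm_apply, Fin.insertNth_zero,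
          Fin.consEquiv]
      rw [this, MvPolynomial.eval_eq_eval_mv_eval']
    have hbad := ih (q.coeff j) (by simpa using hj)
    have hae : ∀ᵐ z ∂(Measure.pi fun _ : Fin n => (volume : Measure ℝ)),
        MvPolynomial.eval z (q.coeff j) ≠ 0 := by
      rw [MeasureTheory.ae_iff]
      simpa using hbad
    rw [← MeasureTheory.lintegral_zero]
    apply MeasureTheory.lintegral_congr_ae
    filter_upwards [hae] with z hz
    rw [hsec z]
    have hpz : Polynomial.map (MvPolynomial.eval z) q ≠ 0 := by
      intro h
      apply hz
      have h2 : (Polynomial.map (MvPolynomial.eval z) q).coeff j = 0 := by rw [h]; simp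
      rwa [Polynomial.coeff_map] at h2
    have : {y : ℝ | Polynomial.eval y (Polynomial.map (MvPolynomial.eval z) q) = 0}.Finite :=
      Polynomial.finite_setOf_isRoot hpz
    exact this.measure_zero _


lemma ac_map_equiv {α β : Type*} [MeasurableSpace α] [MeasurableSpace β]
    {μ ν : Measure α} (e : α ≃ᵐ β) (h : μ ≪ ν) : μ.map e ≪ ν.map e := by
  refine Measure.AbsolutelyContinuous.mk fun s hs h0 => ?_
  rw [e.map_apply] at h0 ⊢
  exact h h0

lemma pi_ac_fin : ∀ (n : ℕ) (μ : Fin n → Measure ℝ), (∀ i, IsProbabilityMeasure (μ i)) →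
    (∀ i, μ i ≪ volume) →
    Measure.pi μ ≪ Measure.pi (fun _ : Fin n => (volume : Measure ℝ)) := by
  intro n
  induction n with
  | zero =>
    intro μ _ _
    rw [Measure.pi_of_empty μ, Measure.pi_of_empty (fun _ : Fin 0 => (volume : Measure ℝ))]
  | succ n ih =>
    intro μ hprob hac
    haveI := hprob
    set e := MeasurableEquiv.piFinSuccAbove (fun _ : Fin (n+1) => ℝ) 0 with he
    have mp1 : MeasurePreserving e (Measure.pi μ)
        ((μ 0).prod (Measure.pi fun j : Fin n => μ ((0 : Fin (n+1)).succAbove j))) :=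
      measurePreserving_piFinSuccAbove μ 0
    have mp2 : MeasurePreserving e (Measure.pi fun _ : Fin (n+1) => (volume : Measure ℝ))
        ((volume : Measure ℝ).prod (Measure.pi fun _ : Fin n => (volume : Measure ℝ))) :=
      measurePreserving_piFinSuccAbove (fun _ : Fin (n+1) => (volume : Measure ℝ)) 0
    have h1 : Measure.pi μ = Measure.map e.symm
        ((μ 0).prod (Measure.pi fun j : Fin n => μ ((0 : Fin (n+1)).succAbove j))) := by
      rw [← mp1.map_eq, MeasurableEquiv.map_symm_map]
    have h2 : Measure.pi (fun _ : Fin (n+1) => (volume : Measure ℝ)) = Measure.map e.symm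
        ((volume : Measure ℝ).prod (Measure.pi fun _ : Fin n => (volume : Measure ℝ))) := by
      rw [← mp2.map_eq, MeasurableEquiv.map_symm_map]
    rw [h1, h2]
    refine ac_map_equiv e.symm ?_
    haveI : ∀ j : Fin n, IsProbabilityMeasure (μ ((0 : Fin (n+1)).succAbove j)) :=
      fun j => hprob _
    exact Measure.AbsolutelyContinuous.prod (hac 0)
      (ih (fun j => μ ((0 : Fin (n+1)).succAbove j)) (fun j => hprob _) (fun j => hac _))

lemma pi_ac {ι : Type*} [Fintype ι] (μ : ι → Measure ℝ) (hprob : ∀ i, IsProbabilityMeasure (μ i))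
    (hac : ∀ i, μ i ≪ volume) :
    Measure.pi μ ≪ Measure.pi (fun _ : ι => (volume : Measure ℝ)) := by
  haveI := hprob
  set e : Fin (Fintype.card ι) ≃ ι := (Fintype.equivFin ι).symm with he
  have h1 : Measure.pi μ = Measure.map (MeasurableEquiv.piCongrLeft (fun _ => ℝ) e)
      (Measure.pi fun j => μ (e j)) := (Measure.pi_map_piCongrLeft e μ).symm
  have h2 : Measure.pi (fun _ : ι => (volume : Measure ℝ))
      = Measure.map (MeasurableEquiv.piCongrLeft (fun _ => ℝ) e)
      (Measure.pi fun _ : Fin (Fintype.card ι) => (volume : Measure ℝ)) :=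
    (Measure.pi_map_piCongrLeft e (fun _ => volume)).symm
  rw [h1, h2]
  exact ac_map_equiv _ (pi_ac_fin _ _ (fun j => hprob _) (fun j => hac _))

lemma joint_law_eq_pi {Ω : Type*} [MeasurableSpace Ω] (P : Measure Ω) [IsProbabilityMeasure P]
    {ι : Type*} [Fintype ι] (f : ι → Ω → ℝ) (hmeas : ∀ i, Measurable (f i))
    (hind : iIndepFun f P) :
    P.map (fun ω i => f i ω) = Measure.pi (fun i => P.map (f i)) := by
  haveI : ∀ i, IsProbabilityMeasure (P.map (f i)) :=
    fun i => Measure.isProbabilityMeasure_map (hmeas i).aemeasurable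
  have hX : Measurable (fun ω i => f i ω) := measurable_pi_lambda _ hmeas
  refine (Measure.pi_eq fun s hs => ?_).symm
  rw [Measure.map_apply hX (MeasurableSet.univ_pi hs)]
  have : (fun ω i => f i ω) ⁻¹' Set.univ.pi s = ⋂ i, f i ⁻¹' s i := by
    ext ω; simp [Set.mem_pi]
  rw [this, hind.meas_iInter fun i => ⟨s i, hs i, rfl⟩]
  exact Finset.prod_congr rfl fun i _ => (Measure.map_apply (hmeas i) (hs i)).symm



lemma mv_null' {ι : Type*} [Fintype ι] (p : MvPolynomial ι ℝ) (hp : p ≠ 0) :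
    (Measure.pi fun _ : ι => (volume : Measure ℝ)) {x | MvPolynomial.eval x p = 0} = 0 := by
  set e : Fin (Fintype.card ι) ≃ ι := (Fintype.equivFin ι).symm with he
  have h1 : (Measure.pi fun _ : ι => (volume : Measure ℝ))
      = Measure.map (MeasurableEquiv.piCongrLeft (fun _ => ℝ) e)
        (Measure.pi fun _ : Fin (Fintype.card ι) => (volume : Measure ℝ)) :=
    (Measure.pi_map_piCongrLeft e (fun _ => volume)).symm
  have hS : MeasurableSet {x : ι → ℝ | MvPolynomial.eval x p = 0} :=
    (measurable_mv_eval p) (measurableSet_singleton 0)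
  rw [h1, Measure.map_apply (MeasurableEquiv.piCongrLeft (fun _ => ℝ) e).measurable hS]
  have hpre : (MeasurableEquiv.piCongrLeft (fun _ => ℝ) e) ⁻¹' {x | MvPolynomial.eval x p = 0}
      = {x : Fin (Fintype.card ι) → ℝ |
          MvPolynomial.eval x (MvPolynomial.rename e.symm p) = 0} := by
    ext x
    simp only [Set.mem_preimage, Set.mem_setOf_eq, MvPolynomial.eval_rename]
    have : (MeasurableEquiv.piCongrLeft (fun _ => ℝ) e) x = x ∘ e.symm := by
      funext i
      obtain ⟨a, rfl⟩ := e.surjective i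
      simp [MeasurableEquiv.piCongrLeft]
    rw [this]
  rw [hpre]
  exact mv_null _ _ fun h =>
    hp (MvPolynomial.rename_injective _ e.symm.injective (by simpa using h))

lemma tele {M : ℕ} (j : Fin M) (h : ℕ → ℝ) :
    (∑ l : Fin M, if (l : ℕ) ≤ (j : ℕ) then h ((l : ℕ) + 1) - h (l : ℕ) else 0)
      = h ((j : ℕ) + 1) - h 0 := by
  rw [Fin.sum_univ_eq_sum_range (fun l => if l ≤ (j : ℕ) then h (l + 1) - h l else 0) M]
  rw [← Finset.sum_range_sub h ((j : ℕ) + 1)]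
  rw [← Finset.sum_filter]
  congr 1
  ext i
  simp only [Finset.mem_filter, Finset.mem_range, Nat.lt_succ_iff]
  have := j.isLt
  omega

lemma exists_det_ne_zero {X : Type*} : ∀ (K : ℕ) (f : Fin K → X → ℝ),
    LinearIndependent ℝ f →
    ∃ z : Fin K → X, (Matrix.of fun r j => f r (z j)).det ≠ 0 := by
  intro K
  induction K with
  | zero =>
    intro f _
    exact ⟨Fin.elim0, by simp [Matrix.det_fin_zero]⟩
  | succ K ih =>
    intro f hf
    obtain ⟨z, hz⟩ := ih (fun r => f (Fin.castSucc r))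
      (hf.comp Fin.castSucc (Fin.castSucc_injective K))
    by_contra hcon
    push_neg at hcon
    set c : Fin (K + 1) → ℝ := fun r =>
      (-1 : ℝ) ^ ((r : ℕ) + K) *
        (Matrix.of fun (r' : Fin K) (j' : Fin K) => f (r.succAbove r') (z j')).det with hc
    have hdet : ∀ x : X, (∑ r, c r * f r x) = 0 := by
      intro x
      have h0 := hcon (Fin.snoc z x : Fin (K + 1) → X)
      rw [Matrix.det_succ_column _ (Fin.last K)] at h0
      rw [← h0]
      refine Finset.sum_congr rfl fun r _ => ?_
      have e2 : ((Matrix.of fun r j => f r ((Fin.snoc z x : Fin (K + 1) → X) j)).submatrix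
            r.succAbove (Fin.last K).succAbove)
          = Matrix.of fun (r' : Fin K) (j' : Fin K) => f (r.succAbove r') (z j') := by
        ext r' j'
        simp [Fin.succAbove_last, Fin.snoc_castSucc]
      rw [hc, e2]
      simp only [Matrix.of_apply, Fin.snoc_last, Fin.val_last]
      ring
    have hall := (Fintype.linearIndependent_iff.mp hf) c (by
      funext x
      simpa [Finset.sum_apply, Pi.smul_apply, smul_eq_mul] using hdet x)
    have hlast := hall (Fin.last K)
    rw [hc] at hlast
    simp only [Fin.val_last] at hlast
    rcases mul_eq_zero.mp hlast with h | h
    · exact pow_ne_zero _ (by norm_num : (-1 : ℝ) ≠ 0) h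
    · apply hz
      convert h using 2
      funext r' j'
      simp [Fin.succAbove_last]

lemma monomials_linIndep {d K : ℕ} (k : Fin K → (Fin d → ℕ)) (hk : Function.Injective k) :
    LinearIndependent ℝ (fun r : Fin K => fun x : Fin d → ℝ => ∏ i, x i ^ (k r i)) := by
  rw [Fintype.linearIndependent_iff]
  intro c hc r
  set u : Fin K → (Fin d →₀ ℕ) := fun r => Finsupp.equivFunOnFinite.symm (k r) with hu'
  have hu : Function.Injective u := Finsupp.equivFunOnFinite.symm.injective.comp hk
  set Q : MvPolynomial (Fin d) ℝ := ∑ r, MvPolynomial.monomial (u r) (c r) with hQ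
  have hQeval : ∀ x : Fin d → ℝ,
      MvPolynomial.eval x Q = ∑ r, c r * ∏ i, x i ^ (k r i) := by
    intro x
    rw [hQ, map_sum]
    refine Finset.sum_congr rfl fun r _ => ?_
    rw [MvPolynomial.eval_monomial]
    congr 1
    rw [Finsupp.prod_fintype _ _ (fun i => pow_zero _)]
    rfl
  have hQ0 : Q = 0 := by
    apply MvPolynomial.funext (q := 0)
    intro x
    rw [hQeval]
    have := congrFun hc x
    simpa [Finset.sum_apply, Pi.smul_apply, smul_eq_mul] using this
  have hco := congrArg (MvPolynomial.coeff (u r)) hQ0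
  rw [hQ] at hco
  rw [MvPolynomial.coeff_sum] at hco
  simp only [MvPolynomial.coeff_monomial, MvPolynomial.coeff_zero] at hco
  rwa [Finset.sum_eq_single r (fun r' _ hr' => if_neg (fun h => hr' (hu h)))
    (fun h => absurd (Finset.mem_univ r) h), if_pos rfl] at hco


set_option maxHeartbeats 2000000 in
/-- **Almost sure linear independence of Wiener monomials.** Let `W` be a standard
`d`-dimensional Brownian motion on `[0,1]` and fix `m`. The (distinct) Wiener monomials of
degree at most `m` are indexed by exponent vectors `k : Fin d → Fin (m+1)` with
`∑ i, k i ≤ m`, the monomial being `W_k(t) = ∏ i, (W i t) ^ (k i)` (with `W_0 = 1`).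
Almost surely, these monomials are linearly independent as functions on `[0,1]`: for every
family of real coefficients `c`, if `∑_k c_k W_k(t) = 0` for all `t ∈ [0,1]`, then all
coefficients vanish. -/
theorem wiener_monomials_linearIndependent
    {Ω : Type*} [MeasurableSpace Ω] (P : Measure Ω) [IsProbabilityMeasure P]
    (d m : ℕ) (W : Fin d → ℝ → Ω → ℝ) (hW : IsStdBrownianMotion P W) :
    ∀ᵐ ω ∂P, ∀ c : (Fin d → Fin (m + 1)) → ℝ,
      (∀ t ∈ Set.Icc (0 : ℝ) 1,
        ∑ k ∈ Finset.univ.filter (fun k : Fin d → Fin (m + 1) => ∑ i, (k i : ℕ) ≤ m),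
          c k * ∏ i, (W i t ω) ^ (k i : ℕ) = 0) →
      ∀ k ∈ Finset.univ.filter (fun k : Fin d → Fin (m + 1) => ∑ i, (k i : ℕ) ≤ m),
        c k = 0 := by
  classical
  set S : Finset (Fin d → Fin (m + 1)) :=
    Finset.univ.filter (fun k : Fin d → Fin (m + 1) => ∑ i, (k i : ℕ) ≤ m) with hSdef
  set M : ℕ := S.card with hMdef
  have hM : 0 < M := by
    rw [hMdef]
    refine Finset.card_pos.2 ⟨fun _ => 0, ?_⟩
    simp [hSdef]
  have hMR : (0 : ℝ) < (M : ℝ) := Nat.cast_pos.2 hM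
  set eS : {k // k ∈ S} ≃ Fin M := Fintype.equivFinOfCardEq (Fintype.card_coe S) with heS
  -- time grid
  set τ : ℕ → ℝ := fun n => ((min n M : ℕ) : ℝ) / (M : ℝ) with hτdef
  have hτmono : Monotone τ := by
    intro a b hab
    have : ((min a M : ℕ) : ℝ) ≤ ((min b M : ℕ) : ℝ) :=
      Nat.cast_le.2 (min_le_min hab le_rfl)
    exact div_le_div_of_nonneg_right this hMR.le  -- may need renaming
  have hτ0 : ∀ n, 0 ≤ τ n := fun n => by positivity
  have hτval : ∀ n, n ≤ M → τ n = (n : ℝ) / (M : ℝ) := by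
    intro n hn; rw [hτdef]; simp [min_eq_left hn]
  -- increments
  set Δ : (Fin d × Fin M) → Ω → ℝ := fun p ω =>
    W p.1 (τ ((p.2 : ℕ) + 1)) ω - W p.1 (τ (p.2 : ℕ)) ω with hΔdef
  have hind : iIndepFun Δ P := hW.indep_incr M τ hτmono hτ0
  have hmeasΔ : ∀ p, Measurable (Δ p) := fun p =>
    (hW.measurable _ _).sub (hW.measurable _ _)
  have hstep : ∀ p : Fin d × Fin M, τ ((p.2 : ℕ) + 1) - τ (p.2 : ℕ) = 1 / (M : ℝ) := by
    intro p
    rw [hτval _ (Nat.succ_le_of_lt p.2.isLt), hτval _ (le_of_lt p.2.isLt)]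
    rw [div_sub_div_same]
    push_cast
    ring_nf
  have hlaw : ∀ p : Fin d × Fin M,
      P.map (Δ p) = gaussianReal 0 (Real.toNNReal (1 / (M : ℝ))) := by
    intro p
    have := hW.gaussian_incr p.1 (τ (p.2 : ℕ)) (τ ((p.2 : ℕ) + 1)) (hτ0 _)
      (hτmono (Nat.le_succ _))
    rw [hΔdef]
    rw [this, hstep p]
  have hvar : Real.toNNReal (1 / (M : ℝ)) ≠ 0 :=
    (Real.toNNReal_pos.mpr (by positivity)).ne'
  haveI hprob : ∀ p : Fin d × Fin M, IsProbabilityMeasure (P.map (Δ p)) := by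
    intro p; rw [hlaw p]; infer_instance
  set Vec : Ω → ((Fin d × Fin M) → ℝ) := fun ω p => Δ p ω with hVecdef
  have hVecMeas : Measurable Vec := measurable_pi_lambda _ hmeasΔ
  have hjoint : P.map Vec = Measure.pi (fun p => P.map (Δ p)) :=
    joint_law_eq_pi P Δ hmeasΔ hind
  have hacVec : P.map Vec ≪ Measure.pi (fun _ : Fin d × Fin M => (volume : Measure ℝ)) := by
    rw [hjoint]
    refine pi_ac _ hprob fun p => ?_
    rw [hlaw p]
    exact gaussianReal_absolutelyContinuous _ hvar
  -- exponents
  set kfun : Fin M → (Fin d → ℕ) := fun r i => ((eS.symm r : Fin d → Fin (m + 1)) i : ℕ)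
    with hkfun
  have hkinj : Function.Injective kfun := by
    intro r r' hrr
    apply eS.symm.injective
    apply Subtype.ext
    funext i
    exact Fin.ext (congrFun hrr i)
  -- polynomial machinery
  set psum : ((Fin d × Fin M) → ℝ) → Fin d → Fin M → ℝ := fun x i j =>
    ∑ l : Fin M, if (l : ℕ) ≤ (j : ℕ) then x (i, l) else 0 with hpsum
  set psumX : Fin d → Fin M → MvPolynomial (Fin d × Fin M) ℝ := fun i j =>
    ∑ l : Fin M, if (l : ℕ) ≤ (j : ℕ) then MvPolynomial.X (i, l) else 0 with hpsumX
  set F : MvPolynomial (Fin d × Fin M) ℝ :=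
    (Matrix.of fun r j : Fin M => ∏ i, (psumX i j) ^ (kfun r i)).det with hF
  have heval_psum : ∀ (x : (Fin d × Fin M) → ℝ) i j,
      MvPolynomial.eval x (psumX i j) = psum x i j := by
    intro x i j
    rw [hpsumX, hpsum, map_sum]
    refine Finset.sum_congr rfl fun l _ => ?_
    rw [apply_ite (MvPolynomial.eval x)]
    simp
  have hevalF : ∀ x : (Fin d × Fin M) → ℝ,
      MvPolynomial.eval x F =
        (Matrix.of fun r j : Fin M => ∏ i, (psum x i j) ^ (kfun r i)).det := by
    intro x
    rw [hF, RingHom.map_det]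
    congr 1
    ext r j
    simp only [RingHom.mapMatrix_apply, Matrix.map_apply, Matrix.of_apply, map_prod, map_pow]
    exact Finset.prod_congr rfl fun i _ => by rw [heval_psum]
  -- nonvanishing of F
  have hF0 : F ≠ 0 := by
    obtain ⟨z, hz⟩ := exists_det_ne_zero M
      (fun r (x : Fin d → ℝ) => ∏ i, x i ^ (kfun r i)) (monomials_linIndep kfun hkinj)
    intro h0
    apply hz
    set Z : ℕ → Fin d → ℝ := fun n i => if h : n < M then z ⟨n, h⟩ i else 0 with hZ
    set hfun : Fin d → ℕ → ℝ := fun i n => if n = 0 then 0 else Z (n - 1) i with hhfun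
    set x₀ : (Fin d × Fin M) → ℝ := fun p =>
      hfun p.1 ((p.2 : ℕ) + 1) - hfun p.1 (p.2 : ℕ) with hx₀def
    have hx₀ : ∀ i j, psum x₀ i j = z j i := by
      intro i j
      have htl := tele j (hfun i)
      show (∑ l : Fin M, if (l : ℕ) ≤ (j : ℕ) then x₀ (i, l) else 0) = z j i
      have hb : (∑ l : Fin M, if (l : ℕ) ≤ (j : ℕ) then x₀ (i, l) else 0)
          = ∑ l : Fin M, if (l : ℕ) ≤ (j : ℕ) then hfun i ((l : ℕ) + 1) - hfun i (l : ℕ)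
            else 0 := rfl
      rw [hb, htl, hhfun]
      simp only [Nat.add_sub_cancel, Nat.succ_ne_zero, if_neg, if_pos rfl]
      rw [hZ]
      simp only [j.isLt, dif_pos, Fin.eta, sub_zero]
      norm_num
    have : MvPolynomial.eval x₀ F = 0 := by rw [h0]; simp
    rw [hevalF] at this
    rw [← this]
    congr 1
    funext r j
    simp only [Matrix.of_apply]
    exact Finset.prod_congr rfl fun i _ => by rw [hx₀]
  -- the a.e. event
  have hZSmeas : MeasurableSet {x : (Fin d × Fin M) → ℝ | MvPolynomial.eval x F = 0} :=
    (measurable_mv_eval F) (measurableSet_singleton 0)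
  have hnull : P {ω | MvPolynomial.eval (Vec ω) F = 0} = 0 := by
    have h1 : {ω | MvPolynomial.eval (Vec ω) F = 0}
        = Vec ⁻¹' {x | MvPolynomial.eval x F = 0} := rfl
    rw [h1, ← Measure.map_apply hVecMeas hZSmeas]
    exact hacVec (mv_null' F hF0)
  have E2 : ∀ᵐ ω ∂P, MvPolynomial.eval (Vec ω) F ≠ 0 := by
    rw [ae_iff]
    simpa using hnull
  have E1 : ∀ᵐ ω ∂P, ∀ i, W i 0 ω = 0 := ae_all_iff.2 hW.init
  filter_upwards [E1, E2] with ω hinit hFω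
  intro c hc
  -- time points
  set t : Fin M → ℝ := fun j => τ ((j : ℕ) + 1) with ht
  have htmem : ∀ j, t j ∈ Set.Icc (0 : ℝ) 1 := by
    intro j
    constructor
    · exact hτ0 _
    · show τ ((j : ℕ) + 1) ≤ 1
      rw [hτval ((j : ℕ) + 1) (by have := j.isLt; omega)]
      rw [div_le_one hMR]
      exact_mod_cast (by have := j.isLt; omega : (j : ℕ) + 1 ≤ M)
  -- identification of W at grid points with partial sums
  have hWt : ∀ (i : Fin d) (j : Fin M), W i (t j) ω = psum (Vec ω) i j := by
    intro i j
    have ht2 := tele j (fun n => W i (τ n) ω)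
    have h3 : (∑ l : Fin M, if (l : ℕ) ≤ (j : ℕ) then Vec ω (i, l) else 0)
        = ∑ l : Fin M, if (l : ℕ) ≤ (j : ℕ)
            then W i (τ ((l : ℕ) + 1)) ω - W i (τ (l : ℕ)) ω else 0 := rfl
    show W i (t j) ω = ∑ l : Fin M, if (l : ℕ) ≤ (j : ℕ) then Vec ω (i, l) else 0
    rw [h3, ht2]
    have hτz : τ 0 = 0 := by rw [hτdef]; simp
    rw [hτz, hinit i, sub_zero]
  -- matrix argument
  set A : Matrix (Fin M) (Fin M) ℝ :=
    Matrix.of fun r j => ∏ i, (psum (Vec ω) i j) ^ (kfun r i) with hA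
  have hdetA : A.det ≠ 0 := by rw [hA, ← hevalF]; exact hFω
  set v : Fin M → ℝ := fun r => c (eS.symm r) with hv
  have hvA : Matrix.vecMul v A = 0 := by
    funext j
    show Matrix.vecMul v A j = (0 : ℝ)
    have h4 : Matrix.vecMul v A j = ∑ r, v r * A r j := by
      simp [Matrix.vecMul, dotProduct]
    rw [h4]
    have h5 : (∑ r, v r * A r j)
        = ∑ κ : {k // k ∈ S}, c κ * ∏ i, (psum (Vec ω) i j) ^ ((κ : Fin d → Fin (m+1)) i : ℕ) := by
      rw [← Equiv.sum_comp eS.symm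
        (fun κ : {k // k ∈ S} =>
          c κ * ∏ i, (psum (Vec ω) i j) ^ ((κ : Fin d → Fin (m+1)) i : ℕ))]
      rfl
    rw [h5, Finset.sum_coe_sort S
      (fun k => c k * ∏ i, (psum (Vec ω) i j) ^ ((k : Fin d → Fin (m+1)) i : ℕ))]
    have h6 := hc (t j) (htmem j)
    have h7 : (∑ k ∈ S, c k * ∏ i, (psum (Vec ω) i j) ^ (k i : ℕ))
        = ∑ k ∈ S, c k * ∏ i, (W i (t j) ω) ^ (k i : ℕ) :=
      Finset.sum_congr rfl fun k _ =>
        congrArg _ (Finset.prod_congr rfl fun i _ => by rw [hWt i j])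
    rw [h7]
    exact h6
  have hv0 : v = 0 := by
    have h7 : Matrix.vecMul (Matrix.vecMul v A) A⁻¹ = 0 := by
      rw [hvA, Matrix.zero_vecMul]
    rwa [Matrix.vecMul_vecMul, Matrix.mul_nonsing_inv A hdetA.isUnit,
      Matrix.vecMul_one] at h7
  intro k hk
  have h8 : c k = v (eS ⟨k, hk⟩) := by rw [hv]; simp
  rw [h8, hv0]
  rfl
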